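/- Convergence rate of mirror descent under relative smoothness and relative strong convexity: suppose F is convex, L-smooth and l-strongly convex relative to φ on a set R (with 0 ≤ l ≤ L), the mirror descent iterates μ_{n+1} = argmin_{ν∈C}{d⁺F(μ_n)(ν−μ_n) + L·D_φ(ν|μ_n)} exist uniquely in R, and φ has first variations at each μ_n. Then for all n ≥ 1 and all ν ∈ dom(F) ∩ dom(φ) ∩ R: F(μ_n) − F(ν) ≤ l·D_φ(ν|μ_0) / ((1 + l/(L−l))^n − 1) ≤ (L/n)·D_φ(ν|μ_0). -/

import Mathlib

open Filter Set

open Topology Finset in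
private lemma aux_fin' {Y : Type*} [AddCommGroup Y] [Module ℝ Y]
    (φ : Y → EReal) (hφbot : ∀ y, φ y ≠ ⊥)
    (hφconv : ∀ x y : Y, ∀ a b : ℝ, 0 ≤ a → 0 ≤ b → a + b = 1 →
      φ (a • x + b • y) ≤ (a : EReal) * φ x + (b : EReal) * φ y)
    (μ0 ν : Y) (hμ : φ μ0 ≠ ⊤) (hν : φ ν ≠ ⊤) (h : ℝ) (h0 : 0 < h) (h1 : h ≤ 1) :
    φ (μ0 + h • (ν - μ0)) ≠ ⊤ ∧
      (φ (μ0 + h • (ν - μ0))).toReal ≤ (1-h) * (φ μ0).toReal + h * (φ ν).toReal := by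
  have hpt : μ0 + h • (ν - μ0) = (1-h) • μ0 + h • ν := by module
  have := hφconv μ0 ν (1-h) h (by linarith) h0.le (by ring)
  rw [← hpt, ← EReal.coe_toReal hμ (hφbot μ0), ← EReal.coe_toReal hν (hφbot ν),
    ← EReal.coe_mul, ← EReal.coe_mul, ← EReal.coe_add] at this
  have htop : φ (μ0 + h • (ν - μ0)) ≠ ⊤ := by
    intro hc; rw [hc] at this; exact (EReal.coe_lt_top _ : ((_:ℝ):EReal) < ⊤).not_ge this
  refine ⟨htop, ?_⟩
  rw [← EReal.coe_toReal htop (hφbot _)] at this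
  exact_mod_cast this

open Topology Finset in
private lemma aux_quot {Y : Type*} [AddCommGroup Y] [Module ℝ Y] [TopologicalSpace Y]
    (φ : Y → EReal) (hφbot : ∀ y, φ y ≠ ⊥)
    (hφconv : ∀ x y : Y, ∀ a b : ℝ, 0 ≤ a → 0 ≤ b → a + b = 1 →
      φ (a • x + b • y) ≤ (a : EReal) * φ x + (b : EReal) * φ y)
    (μ0 ν : Y) (hμ : φ μ0 ≠ ⊤) (hν : φ ν ≠ ⊤) (g : ℝ)
    (hG : Tendsto (fun h : ℝ => ((h⁻¹:ℝ):EReal) * (φ (μ0 + h • (ν - μ0)) - φ μ0))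
      (𝓝[>] (0:ℝ)) (𝓝 (g:EReal))) :
    Tendsto (fun h : ℝ => ((φ (μ0 + h • (ν - μ0))).toReal - (φ μ0).toReal) / h)
      (𝓝[>] (0:ℝ)) (𝓝 g) ∧ g ≤ (φ ν).toReal - (φ μ0).toReal := by
  have key := fun (h : ℝ) (h0 : 0 < h) (h1 : h ≤ 1) =>
    aux_fin' φ hφbot hφconv μ0 ν hμ hν h h0 h1
  have hIoc : Ioc (0:ℝ) 1 ∈ 𝓝[>] (0:ℝ) := Ioc_mem_nhdsGT_of_mem ⟨le_refl _, zero_lt_one⟩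
  have heq : ∀ᶠ h : ℝ in 𝓝[>] (0:ℝ),
      ((((φ (μ0 + h • (ν - μ0))).toReal - (φ μ0).toReal) / h : ℝ) : EReal)
        = ((h⁻¹:ℝ):EReal) * (φ (μ0 + h • (ν - μ0)) - φ μ0) := by
    filter_upwards [hIoc] with h hh
    rw [div_eq_inv_mul, EReal.coe_mul, EReal.coe_sub,
      EReal.coe_toReal (key h hh.1 hh.2).1 (hφbot _), EReal.coe_toReal hμ (hφbot _)]
  have ht : Tendsto
      (fun h : ℝ => ((((φ (μ0 + h • (ν - μ0))).toReal - (φ μ0).toReal) / h : ℝ) : EReal))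
      (𝓝[>] (0:ℝ)) (𝓝 (g:EReal)) := Tendsto.congr' (heq.mono fun h e => e.symm) hG
  have ht' := EReal.tendsto_coe.mp ht
  refine ⟨ht', ?_⟩
  refine le_of_tendsto ht' ?_
  filter_upwards [hIoc] with h hh
  have := (key h hh.1 hh.2).2
  rw [div_le_iff₀ hh.1]
  nlinarith [hh.1]

open Topology Finset in
private lemma aux_rate (L l : ℝ) (hl0 : 0 ≤ l) (hlL : l ≤ L) (a d : ℕ → ℝ)
    (hd : ∀ k, 0 ≤ d k) (hdec : ∀ k, a (k+1) ≤ a k)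
    (hstep : ∀ k, a (k+1) ≤ (L-l) * d k - L * d (k+1)) (n : ℕ) (hn : 1 ≤ n) :
    a n ≤ L / n * d 0 ∧ (0 < l → l < L → a n ≤ l / ((1 + l/(L-l))^n - 1) * d 0) := by
  have hL0 : 0 ≤ L := hl0.trans hlL
  have hanti : Antitone a := antitone_nat_of_succ_le hdec
  have hnpos : (0:ℝ) < n := by exact_mod_cast hn
  constructor
  · have claim1 : ∀ m : ℕ, (∑ k ∈ range m, a (k+1)) ≤ L * (d 0 - d m) := by
      intro m
      induction m with
      | zero => simp
      | succ m ih =>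
        rw [Finset.sum_range_succ]
        have h1 := hstep m
        nlinarith [hd m, mul_nonneg hl0 (hd m)]
    have hsum : (n:ℝ) * a n ≤ ∑ k ∈ range n, a (k+1) := by
      have := Finset.card_nsmul_le_sum (range n) (fun k => a (k+1)) (a n)
        (fun k hk => hanti (Nat.succ_le_of_lt (Finset.mem_range.mp hk)))
      simpa [nsmul_eq_mul] using this
    rw [div_mul_eq_mul_div, le_div_iff₀ hnpos]
    have h5 := claim1 n
    nlinarith [mul_nonneg hL0 (hd n), hsum]
  · intro hlpos hlltL
    set r : ℝ := 1 + l / (L - l) with hr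
    have hLl : 0 < L - l := by linarith
    have hdivpos : 0 < l / (L - l) := div_pos hlpos hLl
    have hr1 : 1 < r := by rw [hr]; linarith
    have hr0 : 0 ≤ r := by linarith
    have hLr : (L - l) * r = L := by rw [hr]; field_simp; ring
    have claim2 : ∀ m : ℕ, (∑ k ∈ range m, r ^ k * a (k+1)) ≤ (L - l) * (d 0 - r ^ m * d m) := by
      intro m
      induction m with
      | zero => simp
      | succ m ih =>
        rw [Finset.sum_range_succ]
        have h1 := hstep m
        have hpow : (0:ℝ) ≤ r ^ m := pow_nonneg hr0 m
        have h2 : r ^ m * a (m+1) ≤ r ^ m * ((L-l) * d m - L * d (m+1)) :=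
          mul_le_mul_of_nonneg_left h1 hpow
        have h3 : r ^ m * L = (L - l) * r ^ (m+1) := by
          rw [pow_succ]; linear_combination r ^ m * hLr.symm
        have key : r ^ m * ((L-l) * d m - L * d (m+1))
            = (L-l) * (r ^ m * d m) - (L-l) * (r ^ (m+1) * d (m+1)) := by
          linear_combination (-(d (m+1))) * h3
        nlinarith [ih, h2, key]
    have hsum : a n * ((r ^ n - 1) / (r - 1)) ≤ ∑ k ∈ range n, r ^ k * a (k+1) := by
      rw [← geom_sum_eq (by linarith : r ≠ 1) n, Finset.mul_sum]
      refine Finset.sum_le_sum fun k hk => ?_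
      have := hanti (Nat.succ_le_of_lt (Finset.mem_range.mp hk))
      rw [mul_comm]
      exact mul_le_mul_of_nonneg_left this (pow_nonneg hr0 k)
    have hpow1 : 1 < r ^ n := one_lt_pow₀ hr1 (by omega)
    have hfin : a n * ((r ^ n - 1) / (r - 1)) ≤ (L - l) * d 0 := by
      refine hsum.trans ((claim2 n).trans ?_)
      nlinarith [mul_nonneg (pow_nonneg hr0 n) (hd n)]
    have hrm1 : r - 1 = l / (L - l) := by rw [hr]; ring
    rw [div_mul_eq_mul_div, le_div_iff₀ (by linarith : (0:ℝ) < r ^ n - 1)]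
    rw [← mul_div_assoc, div_le_iff₀ (by linarith : (0:ℝ) < r - 1)] at hfin
    have hl' : l = (L-l) * (r - 1) := by rw [hrm1]; field_simp
    have heq2 : l * d 0 = (L - l) * d 0 * (r - 1) := by linear_combination d 0 * hl'
    linarith [hfin]

/-- Convergence rate of mirror descent under relative smoothness and relative
strong convexity: `F` and `φ` are convex proper, `F` is `L`-smooth and `l`-strongly convex
relative to `φ` on `R ⊆ C` (`0 ≤ l ≤ L`), the iterates `μ (n+1)` are the unique minimizers
over `C` of `ν ↦ d⁺F(μ n)(ν − μ n) + L·D_φ(ν|μ n)` and belong to `R`, and `F, φ` admit first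
variations `GF n, Gφ n` at each iterate `μ n`. Then the objective values decrease and for all
`n ≥ 1` and all `ν ∈ dom F ∩ dom φ ∩ R`:
`F(μ n) − F(ν) ≤ l·D_φ(ν|μ 0)/((1 + l/(L−l))^n − 1) ≤ (L/n)·D_φ(ν|μ 0)`
(the first bound when `0 < l < L`, the second always, being the `l → 0⁺` limit). -/
theorem mirror_descent_convergence_rate
    {Y : Type*} [AddCommGroup Y] [Module ℝ Y] [TopologicalSpace Y]
    (F φ : Y → EReal)
    (hFbot : ∀ y, F y ≠ ⊥) (hφbot : ∀ y, φ y ≠ ⊥)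
    (hFconv : ∀ x y : Y, ∀ a b : ℝ, 0 ≤ a → 0 ≤ b → a + b = 1 →
      F (a • x + b • y) ≤ (a : EReal) * F x + (b : EReal) * F y)
    (hφconv : ∀ x y : Y, ∀ a b : ℝ, 0 ≤ a → 0 ≤ b → a + b = 1 →
      φ (a • x + b • y) ≤ (a : EReal) * φ x + (b : EReal) * φ y)
    (hφstrict : ∀ x y : Y, x ≠ y → φ x ≠ ⊤ → φ y ≠ ⊤ → ∀ a b : ℝ, 0 < a → 0 < b → a + b = 1 →
      φ (a • x + b • y) < (a : EReal) * φ x + (b : EReal) * φ y)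
    (C R : Set Y) (hC : Convex ℝ C) (hRC : R ⊆ C)
    (L l : ℝ) (hl0 : 0 ≤ l) (hlL : l ≤ L)
    (μ : ℕ → Y) (hμR : ∀ n, μ n ∈ R)
    (hμdom : ∀ n, F (μ n) ≠ ⊤ ∧ φ (μ n) ≠ ⊤)
    -- first variations of `F` and of `φ` at each iterate, in directions within `C`
    (GF Gφ : ℕ → (Y →L[ℝ] ℝ))
    (hGF : ∀ n, ∀ ν ∈ C ∩ {y : Y | F y ≠ ⊤},
      Tendsto (fun h : ℝ => ((h⁻¹ : ℝ) : EReal) * (F (μ n + h • (ν - μ n)) - F (μ n)))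
        (nhdsWithin (0 : ℝ) (Set.Ioi 0)) (nhds ((GF n (ν - μ n) : ℝ) : EReal)))
    (hGφ : ∀ n, ∀ ν ∈ C ∩ {y : Y | φ y ≠ ⊤},
      Tendsto (fun h : ℝ => ((h⁻¹ : ℝ) : EReal) * (φ (μ n + h • (ν - μ n)) - φ (μ n)))
        (nhdsWithin (0 : ℝ) (Set.Ioi 0)) (nhds ((Gφ n (ν - μ n) : ℝ) : EReal)))
    -- `L`-relative smoothness and `l`-relative strong convexity along the iterates, on `R`
    (hsmooth : ∀ n, ∀ ν ∈ R ∩ {y : Y | F y ≠ ⊤} ∩ {y : Y | φ y ≠ ⊤},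
      F ν - F (μ n) - ((GF n (ν - μ n) : ℝ) : EReal)
        ≤ (L : EReal) * (φ ν - φ (μ n) - ((Gφ n (ν - μ n) : ℝ) : EReal)))
    (hstrong : ∀ n, ∀ ν ∈ R ∩ {y : Y | F y ≠ ⊤} ∩ {y : Y | φ y ≠ ⊤},
      (l : EReal) * (φ ν - φ (μ n) - ((Gφ n (ν - μ n) : ℝ) : EReal))
        ≤ F ν - F (μ n) - ((GF n (ν - μ n) : ℝ) : EReal))
    -- `μ (n+1)` is the unique minimizer over `C` of the mirror-descent objective
    (hargmin : ∀ n, μ (n + 1) ∈ C ∧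
      (∀ ν ∈ C,
        ((GF n (μ (n + 1) - μ n) : ℝ) : EReal)
            + (L : EReal) * (φ (μ (n + 1)) - φ (μ n) - ((Gφ n (μ (n + 1) - μ n) : ℝ) : EReal))
          ≤ ((GF n (ν - μ n) : ℝ) : EReal)
            + (L : EReal) * (φ ν - φ (μ n) - ((Gφ n (ν - μ n) : ℝ) : EReal))) ∧
      (∀ ν ∈ C,
        ((GF n (ν - μ n) : ℝ) : EReal)
            + (L : EReal) * (φ ν - φ (μ n) - ((Gφ n (ν - μ n) : ℝ) : EReal))
          = ((GF n (μ (n + 1) - μ n) : ℝ) : EReal)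
            + (L : EReal) * (φ (μ (n + 1)) - φ (μ n) - ((Gφ n (μ (n + 1) - μ n) : ℝ) : EReal))
          → ν = μ (n + 1))) :
    (∀ n, F (μ (n + 1)) ≤ F (μ n)) ∧
    (∀ n : ℕ, 1 ≤ n → ∀ ν, ν ∈ R → F ν ≠ ⊤ → φ ν ≠ ⊤ →
      (F (μ n) - F ν
          ≤ ((L / (n : ℝ) : ℝ) : EReal) * (φ ν - φ (μ 0) - ((Gφ 0 (ν - μ 0) : ℝ) : EReal))) ∧
      (0 < l → l < L →
        F (μ n) - F ν
          ≤ ((l / ((1 + l / (L - l)) ^ n - 1) : ℝ) : EReal)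
              * (φ ν - φ (μ 0) - ((Gφ 0 (ν - μ 0) : ℝ) : EReal)))) := by
  have hμC : ∀ n, μ n ∈ C := fun n => hRC (hμR n)
  -- real form of smoothness at consecutive iterates
  have smoothR : ∀ n, (F (μ (n+1))).toReal - (F (μ n)).toReal - GF n (μ (n+1) - μ n)
      ≤ L * ((φ (μ (n+1))).toReal - (φ (μ n)).toReal - Gφ n (μ (n+1) - μ n)) := by
    intro n
    have hs := hsmooth n (μ (n+1)) ⟨⟨hμR _, (hμdom _).1⟩, (hμdom _).2⟩
    rw [← EReal.coe_toReal (hμdom (n+1)).1 (hFbot _), ← EReal.coe_toReal (hμdom n).1 (hFbot _),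
      ← EReal.coe_toReal (hμdom (n+1)).2 (hφbot _),
      ← EReal.coe_toReal (hμdom n).2 (hφbot _)] at hs
    exact_mod_cast hs
  -- real form of strong convexity
  have strongR : ∀ n, ∀ ν, ν ∈ R → F ν ≠ ⊤ → φ ν ≠ ⊤ →
      l * ((φ ν).toReal - (φ (μ n)).toReal - Gφ n (ν - μ n))
        ≤ (F ν).toReal - (F (μ n)).toReal - GF n (ν - μ n) := by
    intro n ν hνR hνF hνφ
    have hs := hstrong n ν ⟨⟨hνR, hνF⟩, hνφ⟩
    rw [← EReal.coe_toReal hνF (hFbot _), ← EReal.coe_toReal (hμdom n).1 (hFbot _),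
      ← EReal.coe_toReal hνφ (hφbot _), ← EReal.coe_toReal (hμdom n).2 (hφbot _)] at hs
    exact_mod_cast hs
  -- real form of the argmin minimality
  have argminR : ∀ n, ∀ ν, ν ∈ C → φ ν ≠ ⊤ →
      GF n (μ (n+1) - μ n)
          + L * ((φ (μ (n+1))).toReal - (φ (μ n)).toReal - Gφ n (μ (n+1) - μ n))
        ≤ GF n (ν - μ n) + L * ((φ ν).toReal - (φ (μ n)).toReal - Gφ n (ν - μ n)) := by
    intro n ν hνC hνφ
    have hs := (hargmin n).2.1 ν hνC
    rw [← EReal.coe_toReal (hμdom (n+1)).2 (hφbot _), ← EReal.coe_toReal (hμdom n).2 (hφbot _),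
      ← EReal.coe_toReal hνφ (hφbot _)] at hs
    exact_mod_cast hs
  -- descent
  have descentR : ∀ n, (F (μ (n+1))).toReal ≤ (F (μ n)).toReal := by
    intro n
    have h1 := smoothR n
    have h2 := argminR n (μ n) (hμC n) (hμdom n).2
    simp only [sub_self, map_zero] at h2
    linarith
  -- nonnegativity of the Bregman divergence
  have Dneg : ∀ m, ∀ ν, ν ∈ C → φ ν ≠ ⊤ →
      Gφ m (ν - μ m) ≤ (φ ν).toReal - (φ (μ m)).toReal := fun m ν hνC hνφ =>
    (aux_quot φ hφbot hφconv (μ m) ν (hμdom m).2 hνφ _ (hGφ m ν ⟨hνC, hνφ⟩)).2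
  -- first-order optimality of the argmin
  have opt : ∀ n, ∀ ν, ν ∈ C → φ ν ≠ ⊤ →
      0 ≤ GF n (ν - μ (n+1))
          + L * (Gφ (n+1) (ν - μ (n+1)) - Gφ n (ν - μ (n+1))) := by
    intro n ν hνC hνφ
    have hq := (aux_quot φ hφbot hφconv (μ (n+1)) ν (hμdom (n+1)).2 hνφ _
      (hGφ (n+1) ν ⟨hνC, hνφ⟩)).1
    have hlim : Tendsto (fun h : ℝ => GF n (ν - μ (n+1))
        + L * (((φ (μ (n+1) + h • (ν - μ (n+1)))).toReal - (φ (μ (n+1))).toReal) / h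
          - Gφ n (ν - μ (n+1))))
        (nhdsWithin (0:ℝ) (Set.Ioi 0))
        (nhds (GF n (ν - μ (n+1))
          + L * (Gφ (n+1) (ν - μ (n+1)) - Gφ n (ν - μ (n+1))))) :=
      tendsto_const_nhds.add ((hq.sub_const _).const_mul L)
    refine ge_of_tendsto hlim ?_
    filter_upwards [Ioc_mem_nhdsGT_of_mem ⟨le_refl (0:ℝ), zero_lt_one⟩] with h hh
    have hmem : μ (n+1) + h • (ν - μ (n+1)) ∈ C := by
      rw [show μ (n+1) + h • (ν - μ (n+1)) = (1-h) • μ (n+1) + h • ν by module]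
      exact hC (hμC (n+1)) hνC (by linarith [hh.1, hh.2]) hh.1.le (by ring)
    have hfin : φ (μ (n+1) + h • (ν - μ (n+1))) ≠ ⊤ :=
      (aux_fin' φ hφbot hφconv _ _ (hμdom (n+1)).2 hνφ h hh.1 hh.2).1
    have har := argminR n _ hmem hfin
    have e1 : GF n (μ (n+1) + h • (ν - μ (n+1)) - μ n)
        = GF n (μ (n+1) - μ n) + h * GF n (ν - μ (n+1)) := by
      rw [show μ (n+1) + h • (ν - μ (n+1)) - μ n
        = (μ (n+1) - μ n) + h • (ν - μ (n+1)) by abel, map_add, map_smul, smul_eq_mul]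
    have e2 : Gφ n (μ (n+1) + h • (ν - μ (n+1)) - μ n)
        = Gφ n (μ (n+1) - μ n) + h * Gφ n (ν - μ (n+1)) := by
      rw [show μ (n+1) + h • (ν - μ (n+1)) - μ n
        = (μ (n+1) - μ n) + h • (ν - μ (n+1)) by abel, map_add, map_smul, smul_eq_mul]
    rw [e1, e2] at har
    have h4 : 0 ≤ h * GF n (ν - μ (n+1))
        + L * (((φ (μ (n+1) + h • (ν - μ (n+1)))).toReal - (φ (μ (n+1))).toReal)
          - h * Gφ n (ν - μ (n+1))) := by linarith
    have hmd : h * (((φ (μ (n+1) + h • (ν - μ (n+1)))).toReal - (φ (μ (n+1))).toReal) / h)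
        = ((φ (μ (n+1) + h • (ν - μ (n+1)))).toReal - (φ (μ (n+1))).toReal) :=
      mul_div_cancel₀ _ (ne_of_gt hh.1)
    refine nonneg_of_mul_nonneg_right ?_ hh.1
    have : h * (GF n (ν - μ (n+1))
        + L * (((φ (μ (n+1) + h • (ν - μ (n+1)))).toReal - (φ (μ (n+1))).toReal) / h
          - Gφ n (ν - μ (n+1))))
        = h * GF n (ν - μ (n+1))
          + L * (((φ (μ (n+1) + h • (ν - μ (n+1)))).toReal - (φ (μ (n+1))).toReal)
            - h * Gφ n (ν - μ (n+1))) := by linear_combination L * hmd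
    linarith [h4]
  -- per-step key inequality
  have stepR : ∀ k, ∀ ν, ν ∈ R → F ν ≠ ⊤ → φ ν ≠ ⊤ →
      (F (μ (k+1))).toReal - (F ν).toReal
        ≤ (L - l) * ((φ ν).toReal - (φ (μ k)).toReal - Gφ k (ν - μ k))
          - L * ((φ ν).toReal - (φ (μ (k+1))).toReal - Gφ (k+1) (ν - μ (k+1))) := by
    intro k ν hνR hνF hνφ
    have h1 := smoothR k
    have h2 := opt k ν (hRC hνR) hνφ
    have h3 := strongR k ν hνR hνF hνφ
    have eGF : GF k (ν - μ k) = GF k (μ (k+1) - μ k) + GF k (ν - μ (k+1)) := by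
      rw [← map_add]; congr 1; abel
    have eGφ : L * Gφ k (ν - μ k)
        = L * Gφ k (μ (k+1) - μ k) + L * Gφ k (ν - μ (k+1)) := by
      rw [← mul_add, ← map_add]; congr 2; abel
    linarith
  constructor
  · intro n
    rw [← EReal.coe_toReal (hμdom (n+1)).1 (hFbot _), ← EReal.coe_toReal (hμdom n).1 (hFbot _)]
    exact_mod_cast descentR n
  · intro n hn ν hνR hνF hνφ
    obtain ⟨hb1, hb2⟩ := aux_rate L l hl0 hlL
      (fun k => (F (μ k)).toReal - (F ν).toReal)
      (fun k => (φ ν).toReal - (φ (μ k)).toReal - Gφ k (ν - μ k))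
      (fun k => by
        have := Dneg k ν (hRC hνR) hνφ
        linarith)
      (fun k => by have := descentR k; linarith)
      (fun k => by have := stepR k ν hνR hνF hνφ; linarith)
      n hn
    have hgoal : ∀ c : ℝ,
        ((F (μ n)).toReal : ℝ) - (F ν).toReal
            ≤ c * ((φ ν).toReal - (φ (μ 0)).toReal - Gφ 0 (ν - μ 0)) →
        F (μ n) - F ν ≤ (c : EReal) * (φ ν - φ (μ 0) - ((Gφ 0 (ν - μ 0) : ℝ) : EReal)) := by
      intro c hc
      rw [← EReal.coe_toReal (hμdom n).1 (hFbot _), ← EReal.coe_toReal hνF (hFbot _),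
        ← EReal.coe_toReal hνφ (hφbot _), ← EReal.coe_toReal (hμdom 0).2 (hφbot _)]
      exact_mod_cast hc
    exact ⟨hgoal _ hb1, fun hp1 hp2 => hgoal _ (hb2 hp1 hp2)⟩
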